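/- Let h(x) = (x²−1)²/4 and let f be the clipped loss with parameters 1 < a < b. There exists a constant A ≥ 1 such that for all a ≥ A and b ≥ 2a, for every x ∈ ℝ: |f′(x) − h′(x)| ≤ 7|x|³·1{|x| ≥ a} and |f″(x) − h″(x)| ≤ 9x²·1{|x| ≥ a}. In particular f′ = h′ and f″ = h″ on [−a, a]. -/

import Mathlib

/-- The quartic loss `h(x) = (x² - 1)² / 4`. -/
noncomputable def hq (x : ℝ) : ℝ := (x ^ 2 - 1) ^ 2 / 4

/-- The clipped loss `f` with parameters `a < b`: it agrees with `hq` on `[-a, a]`,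
is a cubic spline on `a < |x| ≤ b` (built from `h'(a) = a³ - a` and `h''(a) = 3a² - 1`),
and is linear for `|x| > b`. -/
noncomputable def fclip (a b x : ℝ) : ℝ :=
  if |x| ≤ a then hq x
  else if |x| ≤ b then
    hq a + (a ^ 3 - a) * (|x| - a) + ((3 * a ^ 2 - 1) / 2) * (|x| - a) ^ 2
      - ((3 * a ^ 2 - 1) / (6 * (b - a))) * (|x| - a) ^ 3
  else
    (hq a + (a ^ 3 - a) * (b - a) + ((3 * a ^ 2 - 1) / 2) * (b - a) ^ 2
      - ((3 * a ^ 2 - 1) / (6 * (b - a))) * (b - a) ^ 3)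
      + ((a ^ 3 - a) + ((b - a) / 2) * (3 * a ^ 2 - 1)) * (|x| - b)


noncomputable def Sp (a b t : ℝ) : ℝ :=
  hq a + (a ^ 3 - a) * (t - a) + ((3 * a ^ 2 - 1) / 2) * (t - a) ^ 2
    - ((3 * a ^ 2 - 1) / (6 * (b - a))) * (t - a) ^ 3

noncomputable def Sp1 (a b t : ℝ) : ℝ :=
  (a ^ 3 - a) + (3 * a ^ 2 - 1) * (t - a) - ((3 * a ^ 2 - 1) / (2 * (b - a))) * (t - a) ^ 2

noncomputable def Sp2 (a b t : ℝ) : ℝ :=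
  (3 * a ^ 2 - 1) - ((3 * a ^ 2 - 1) / (b - a)) * (t - a)

noncomputable def cL (a b : ℝ) : ℝ := (a ^ 3 - a) + ((b - a) / 2) * (3 * a ^ 2 - 1)

noncomputable def Lf (a b t : ℝ) : ℝ := Sp a b b + cL a b * (t - b)

lemma hq_hasDeriv (x : ℝ) : HasDerivAt hq (x ^ 3 - x) x := by
  have h : HasDerivAt (fun x : ℝ => (x ^ 2 - 1) ^ 2 / 4) (x ^ 3 - x) x := by
    have h1 : HasDerivAt (fun x : ℝ => x ^ 2 - 1) (2 * x) x := by
      simpa using (hasDerivAt_pow 2 x).sub_const 1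
    have h2 := (h1.pow 2).div_const 4
    exact h2.congr_deriv (by norm_num; ring)
  exact h

lemma Sp_hasDeriv (a b t : ℝ) (hba : b - a ≠ 0) : HasDerivAt (Sp a b) (Sp1 a b t) t := by
  have h0 : HasDerivAt (fun t : ℝ => t - a) 1 t := (hasDerivAt_id t).sub_const a
  have h := (((hasDerivAt_const t (hq a)).add (h0.const_mul (a ^ 3 - a))).add
      ((h0.pow 2).const_mul ((3 * a ^ 2 - 1) / 2))).sub
      ((h0.pow 3).const_mul ((3 * a ^ 2 - 1) / (6 * (b - a))))
  refine h.congr_deriv ?_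
  unfold Sp1
  push_cast
  field_simp
  ring

lemma Sp1_hasDeriv (a b t : ℝ) (hba : b - a ≠ 0) : HasDerivAt (Sp1 a b) (Sp2 a b t) t := by
  have h0 : HasDerivAt (fun t : ℝ => t - a) 1 t := (hasDerivAt_id t).sub_const a
  have h := (((hasDerivAt_const t (a ^ 3 - a)).add (h0.const_mul (3 * a ^ 2 - 1))).sub
      ((h0.pow 2).const_mul ((3 * a ^ 2 - 1) / (2 * (b - a)))))
  refine h.congr_deriv ?_
  unfold Sp2
  push_cast
  field_simp
  ring

lemma Lf_hasDeriv (a b t : ℝ) : HasDerivAt (Lf a b) (cL a b) t := by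
  have h0 : HasDerivAt (fun t : ℝ => t - b) 1 t := (hasDerivAt_id t).sub_const b
  have h := (hasDerivAt_const t (Sp a b b)).add ((h0.const_mul (cL a b)))
  exact h.congr_deriv (by ring)


lemma fclip_eq (a b x : ℝ) :
    fclip a b x = if |x| ≤ a then hq x else if |x| ≤ b then Sp a b |x| else Lf a b |x| := by
  simp only [fclip, Sp, Lf, cL]

noncomputable def F1 (a b x : ℝ) : ℝ :=
  if |x| ≤ a then x ^ 3 - x
  else if |x| ≤ b then Real.sign x * Sp1 a b |x|
  else Real.sign x * cL a b

noncomputable def F2 (a b x : ℝ) : ℝ :=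
  if |x| ≤ a then 3 * x ^ 2 - 1
  else if |x| ≤ b then Sp2 a b |x|
  else 0

lemma fclip_even (a b x : ℝ) : fclip a b (-x) = fclip a b x := by
  simp only [fclip, abs_neg, hq]
  split_ifs <;> ring_nf

lemma F1_odd (a b x : ℝ) : F1 a b (-x) = -F1 a b x := by
  simp only [F1, abs_neg, Real.sign_neg]
  split_ifs <;> ring

lemma F2_even (a b x : ℝ) : F2 a b (-x) = F2 a b x := by
  simp [F2, abs_neg]

lemma hasDerivAt_comp_neg {f : ℝ → ℝ} {d x : ℝ} (h : HasDerivAt f d x) :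
    HasDerivAt (fun y => f (-y)) (-d) (-x) := by
  have hn : HasDerivAt (fun y : ℝ => -y) (-1 : ℝ) (-x) := hasDerivAt_neg (-x)
  have h' : HasDerivAt f d (-(-x)) := by rwa [neg_neg]
  have h2 := h'.comp (-x) hn; rw [mul_neg_one] at h2; exact h2

lemma fclip_hasDeriv_nonneg (a b : ℝ) (ha : 1 ≤ a) (hb : 2 * a ≤ b) {x : ℝ} (hx : 0 ≤ x) :
    HasDerivAt (fclip a b) (F1 a b x) x := by
  have ha0 : 0 < a := by linarith
  have hab : a < b := by linarith
  have hba : b - a ≠ 0 := by intro h; nlinarith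
  rcases lt_trichotomy x a with hxa | hxa | hxa
  · -- |x| < a
    have habs : |x| = x := abs_of_nonneg hx
    have hev : ∀ᶠ y in nhds x, fclip a b y = hq y := by
      filter_upwards [isOpen_Ioo.eventually_mem (show x ∈ Set.Ioo (-a) a by
        constructor <;> [linarith; exact hxa])] with y hy
      have : |y| ≤ a := le_of_lt (abs_lt.mpr ⟨hy.1, hy.2⟩)
      simp [fclip, this]
    have := (hq_hasDeriv x).congr_of_eventuallyEq hev
    have hF : F1 a b x = x ^ 3 - x := by
      rw [F1, if_pos (by rw [habs]; exact le_of_lt hxa)]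
    rwa [hF]
  · -- x = a
    subst hxa
    have haa : |x| = x := abs_of_nonneg hx
    have left : HasDerivWithinAt (fclip x b) (x ^ 3 - x) (Set.Iic x) x := by
      have hqd := (hq_hasDeriv x).hasDerivWithinAt (s := Set.Iic x)
      have hev : fclip x b =ᶠ[nhdsWithin x (Set.Iic x)] hq := by
        filter_upwards [(isOpen_Ioi.eventually_mem (show x ∈ Set.Ioi (-x) by
          simp; linarith)).filter_mono nhdsWithin_le_nhds,
          eventually_mem_nhdsWithin] with y hy1 hy2
        have : |y| ≤ x := abs_le.mpr ⟨le_of_lt hy1, hy2⟩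
        simp [fclip, this]
      exact hqd.congr_of_eventuallyEq hev (by simp [fclip, haa])
    have right : HasDerivWithinAt (fclip x b) (x ^ 3 - x) (Set.Ici x) x := by
      have hSd := (Sp_hasDeriv x b x hba).hasDerivWithinAt (s := Set.Ici x)
      have hev : fclip x b =ᶠ[nhdsWithin x (Set.Ici x)] Sp x b := by
        filter_upwards [(isOpen_Iio.eventually_mem (show x ∈ Set.Iio b from hab)).filter_mono
          nhdsWithin_le_nhds, eventually_mem_nhdsWithin] with y hy1 hy2
        have hyx : x ≤ y := hy2
        have habsy : |y| = y := abs_of_nonneg (le_trans hx hyx)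
        rcases eq_or_lt_of_le hyx with rfl | hlt
        · rw [fclip_eq]
          simp [habsy, Sp]
        · rw [fclip_eq, habsy, if_neg (not_le.mpr hlt), if_pos (le_of_lt hy1)]
      have hval : Sp1 x b x = x ^ 3 - x := by simp [Sp1]
      rw [← hval]
      exact hSd.congr_of_eventuallyEq hev (by rw [fclip_eq]; simp [haa, Sp])
    have := left.union right
    rw [Set.Iic_union_Ici] at this
    have hd := hasDerivWithinAt_univ.mp this
    have hF : F1 x b x = x ^ 3 - x := by rw [F1, if_pos (le_of_eq haa)]
    rwa [hF]
  · -- x > a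
    have hx0 : 0 < x := lt_trans ha0 hxa
    have habs : |x| = x := abs_of_pos hx0
    rcases lt_trichotomy x b with hxb | hxb | hxb
    · -- a < x < b
      have hev : ∀ᶠ y in nhds x, fclip a b y = Sp a b y := by
        filter_upwards [isOpen_Ioo.eventually_mem (show x ∈ Set.Ioo a b from ⟨hxa, hxb⟩)]
          with y hy
        have habsy : |y| = y := abs_of_pos (lt_trans ha0 hy.1)
        rw [fclip_eq, habsy, if_neg (not_le.mpr hy.1), if_pos (le_of_lt hy.2)]
      have := (Sp_hasDeriv a b x hba).congr_of_eventuallyEq hev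
      have hF : F1 a b x = Sp1 a b x := by
        rw [F1, if_neg (by rw [habs]; exact not_le.mpr hxa), if_pos (by rw [habs]; exact le_of_lt hxb),
          Real.sign_of_pos hx0, habs, one_mul]
      rwa [hF]
    · -- x = b
      subst hxb
      have hSpL : Sp a x x = Lf a x x := by simp [Lf]
      have hcL : Sp1 a x x = cL a x := by
        rw [Sp1, cL]; field_simp; ring
      have left : HasDerivWithinAt (fclip a x) (cL a x) (Set.Iic x) x := by
        have hSd := (Sp_hasDeriv a x x hba).hasDerivWithinAt (s := Set.Iic x)
        rw [hcL] at hSd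
        have hev : fclip a x =ᶠ[nhdsWithin x (Set.Iic x)] Sp a x := by
          filter_upwards [(isOpen_Ioi.eventually_mem (show x ∈ Set.Ioi a from hxa)).filter_mono
            nhdsWithin_le_nhds, eventually_mem_nhdsWithin] with y hy1 hy2
          have habsy : |y| = y := abs_of_pos (lt_trans ha0 hy1)
          rw [fclip_eq, habsy, if_neg (not_le.mpr hy1), if_pos (show y ≤ x from hy2)]
        exact hSd.congr_of_eventuallyEq hev (by
          rw [fclip_eq, habs, if_neg (not_le.mpr hxa), if_pos le_rfl])
      have right : HasDerivWithinAt (fclip a x) (cL a x) (Set.Ici x) x := by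
        have hLd := (Lf_hasDeriv a x x).hasDerivWithinAt (s := Set.Ici x)
        have hev : fclip a x =ᶠ[nhdsWithin x (Set.Ici x)] Lf a x := by
          filter_upwards [eventually_mem_nhdsWithin] with y hy2
          have hyx : x ≤ y := hy2
          have habsy : |y| = y := abs_of_nonneg (le_trans (le_of_lt hx0) hyx)
          rcases eq_or_lt_of_le hyx with rfl | hlt
          · rw [fclip_eq, habsy, if_neg (not_le.mpr hxa), if_pos le_rfl, hSpL]
          · rw [fclip_eq, habsy, if_neg (by push_neg; linarith), if_neg (not_le.mpr hlt)]
        exact hLd.congr_of_eventuallyEq hev (by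
          rw [fclip_eq, habs, if_neg (not_le.mpr hxa), if_pos le_rfl, hSpL])
      have := left.union right
      rw [Set.Iic_union_Ici] at this
      have hd := hasDerivWithinAt_univ.mp this
      have hF : F1 a x x = cL a x := by
        rw [F1, habs, if_neg (not_le.mpr hxa), if_pos le_rfl, Real.sign_of_pos hx0, one_mul, hcL]
      rwa [hF]
    · -- x > b
      have hev : ∀ᶠ y in nhds x, fclip a b y = Lf a b y := by
        filter_upwards [isOpen_Ioi.eventually_mem (show x ∈ Set.Ioi b from hxb)] with y hy
        have habsy : |y| = y := abs_of_pos (by have : b < y := hy; linarith)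
        rw [fclip_eq, habsy, if_neg (by push_neg; linarith [show b < y from hy]),
          if_neg (not_le.mpr hy)]
      have := (Lf_hasDeriv a b x).congr_of_eventuallyEq hev
      have hF : F1 a b x = cL a b := by
        rw [F1, habs, if_neg (by push_neg; linarith), if_neg (not_le.mpr hxb),
          Real.sign_of_pos hx0, one_mul]
      rwa [hF]

lemma fclip_hasDeriv (a b : ℝ) (ha : 1 ≤ a) (hb : 2 * a ≤ b) (x : ℝ) :
    HasDerivAt (fclip a b) (F1 a b x) x := by
  rcases le_or_gt 0 x with h | h
  · exact fclip_hasDeriv_nonneg a b ha hb h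
  · have h1 := hasDerivAt_comp_neg (fclip_hasDeriv_nonneg a b ha hb (x := -x) (by linarith))
    rw [neg_neg] at h1
    simp only [fclip_even] at h1
    rw [F1_odd, neg_neg] at h1
    exact h1

lemma cube_hasDeriv (x : ℝ) : HasDerivAt (fun y : ℝ => y ^ 3 - y) (3 * x ^ 2 - 1) x := by
  have h := (hasDerivAt_pow 3 x).sub (hasDerivAt_id x)
  exact h.congr_deriv (by norm_num)

lemma F1_hasDeriv_nonneg (a b : ℝ) (ha : 1 ≤ a) (hb : 2 * a ≤ b) {x : ℝ} (hx : 0 ≤ x) :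
    HasDerivAt (F1 a b) (F2 a b x) x := by
  have ha0 : 0 < a := by linarith
  have hab : a < b := by linarith
  have hba : b - a ≠ 0 := by intro h; nlinarith
  rcases lt_trichotomy x a with hxa | hxa | hxa
  · have habs : |x| = x := abs_of_nonneg hx
    have hev : ∀ᶠ y in nhds x, F1 a b y = y ^ 3 - y := by
      filter_upwards [isOpen_Ioo.eventually_mem (show x ∈ Set.Ioo (-a) a by
        constructor <;> [linarith; exact hxa])] with y hy
      have : |y| ≤ a := le_of_lt (abs_lt.mpr ⟨hy.1, hy.2⟩)
      rw [F1, if_pos this]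
    have := (cube_hasDeriv x).congr_of_eventuallyEq hev
    have hF : F2 a b x = 3 * x ^ 2 - 1 := by
      rw [F2, if_pos (by rw [habs]; exact le_of_lt hxa)]
    rwa [hF]
  · subst hxa
    have haa : |x| = x := abs_of_nonneg hx
    have left : HasDerivWithinAt (F1 x b) (3 * x ^ 2 - 1) (Set.Iic x) x := by
      have hqd := (cube_hasDeriv x).hasDerivWithinAt (s := Set.Iic x)
      have hev : F1 x b =ᶠ[nhdsWithin x (Set.Iic x)] (fun y => y ^ 3 - y) := by
        filter_upwards [(isOpen_Ioi.eventually_mem (show x ∈ Set.Ioi (-x) by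
          simp; linarith)).filter_mono nhdsWithin_le_nhds,
          eventually_mem_nhdsWithin] with y hy1 hy2
        have : |y| ≤ x := abs_le.mpr ⟨le_of_lt hy1, hy2⟩
        rw [F1, if_pos this]
      exact hqd.congr_of_eventuallyEq hev (by rw [F1, if_pos (le_of_eq haa)])
    have right : HasDerivWithinAt (F1 x b) (3 * x ^ 2 - 1) (Set.Ici x) x := by
      have hSd := (Sp1_hasDeriv x b x hba).hasDerivWithinAt (s := Set.Ici x)
      have hev : F1 x b =ᶠ[nhdsWithin x (Set.Ici x)] Sp1 x b := by
        filter_upwards [(isOpen_Iio.eventually_mem (show x ∈ Set.Iio b from hab)).filter_mono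
          nhdsWithin_le_nhds, eventually_mem_nhdsWithin] with y hy1 hy2
        have hyx : x ≤ y := hy2
        have hy0 : 0 < y := lt_of_lt_of_le (by linarith : (0:ℝ) < x) hyx
        have habsy : |y| = y := abs_of_pos hy0
        rcases eq_or_lt_of_le hyx with rfl | hlt
        · rw [F1, if_pos (le_of_eq habsy)]
          simp [Sp1]
        · rw [F1, habsy, if_neg (not_le.mpr hlt), if_pos (le_of_lt hy1),
            Real.sign_of_pos hy0, one_mul]
      have hval : Sp2 x b x = 3 * x ^ 2 - 1 := by simp [Sp2]
      rw [← hval]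
      exact hSd.congr_of_eventuallyEq hev (by rw [F1, if_pos (le_of_eq haa)]; simp [Sp1])
    have := left.union right
    rw [Set.Iic_union_Ici] at this
    have hd := hasDerivWithinAt_univ.mp this
    have hF : F2 x b x = 3 * x ^ 2 - 1 := by rw [F2, if_pos (le_of_eq haa)]
    rwa [hF]
  · have hx0 : 0 < x := lt_trans ha0 hxa
    have habs : |x| = x := abs_of_pos hx0
    rcases lt_trichotomy x b with hxb | hxb | hxb
    · have hev : ∀ᶠ y in nhds x, F1 a b y = Sp1 a b y := by
        filter_upwards [isOpen_Ioo.eventually_mem (show x ∈ Set.Ioo a b from ⟨hxa, hxb⟩)]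
          with y hy
        have hy0 : 0 < y := lt_trans ha0 hy.1
        have habsy : |y| = y := abs_of_pos hy0
        rw [F1, habsy, if_neg (not_le.mpr hy.1), if_pos (le_of_lt hy.2),
          Real.sign_of_pos hy0, one_mul]
      have := (Sp1_hasDeriv a b x hba).congr_of_eventuallyEq hev
      have hF : F2 a b x = Sp2 a b x := by
        rw [F2, habs, if_neg (not_le.mpr hxa), if_pos (le_of_lt hxb)]
      rwa [hF]
    · subst hxb
      have hcL : Sp1 a x x = cL a x := by rw [Sp1, cL]; field_simp; ring
      have hS2 : Sp2 a x x = 0 := by rw [Sp2]; field_simp; ring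
      have left : HasDerivWithinAt (F1 a x) 0 (Set.Iic x) x := by
        have hSd := (Sp1_hasDeriv a x x hba).hasDerivWithinAt (s := Set.Iic x)
        rw [hS2] at hSd
        have hev : F1 a x =ᶠ[nhdsWithin x (Set.Iic x)] Sp1 a x := by
          filter_upwards [(isOpen_Ioi.eventually_mem (show x ∈ Set.Ioi a from hxa)).filter_mono
            nhdsWithin_le_nhds, eventually_mem_nhdsWithin] with y hy1 hy2
          have hy0 : 0 < y := lt_trans ha0 hy1
          have habsy : |y| = y := abs_of_pos hy0
          rw [F1, habsy, if_neg (not_le.mpr hy1), if_pos (show y ≤ x from hy2),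
            Real.sign_of_pos hy0, one_mul]
        exact hSd.congr_of_eventuallyEq hev (by
          rw [F1, habs, if_neg (not_le.mpr hxa), if_pos le_rfl, Real.sign_of_pos hx0, one_mul])
      have right : HasDerivWithinAt (F1 a x) 0 (Set.Ici x) x := by
        have hLd := (hasDerivWithinAt_const x (Set.Ici x) (cL a x))
        have hev : F1 a x =ᶠ[nhdsWithin x (Set.Ici x)] (fun _ => cL a x) := by
          filter_upwards [eventually_mem_nhdsWithin] with y hy2
          have hyx : x ≤ y := hy2
          have hy0 : 0 < y := lt_of_lt_of_le hx0 hyx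
          have habsy : |y| = y := abs_of_pos hy0
          rcases eq_or_lt_of_le hyx with rfl | hlt
          · rw [F1, habsy, if_neg (not_le.mpr hxa), if_pos le_rfl,
              Real.sign_of_pos hy0, one_mul, hcL]
          · rw [F1, habsy, if_neg (by push_neg; linarith), if_neg (not_le.mpr hlt),
              Real.sign_of_pos hy0, one_mul]
        exact hLd.congr_of_eventuallyEq hev (by
          rw [F1, habs, if_neg (not_le.mpr hxa), if_pos le_rfl, Real.sign_of_pos hx0,
            one_mul, hcL])
      have := left.union right
      rw [Set.Iic_union_Ici] at this
      have hd := hasDerivWithinAt_univ.mp this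
      have hF : F2 a x x = 0 := by
        rw [F2, habs, if_neg (not_le.mpr hxa), if_pos le_rfl, hS2]
      rwa [hF]
    · have hev : ∀ᶠ y in nhds x, F1 a b y = cL a b := by
        filter_upwards [isOpen_Ioi.eventually_mem (show x ∈ Set.Ioi b from hxb)] with y hy
        have hby : b < y := hy
        have hy0 : 0 < y := by linarith
        have habsy : |y| = y := abs_of_pos hy0
        rw [F1, habsy, if_neg (by push_neg; linarith), if_neg (not_le.mpr hby),
          Real.sign_of_pos hy0, one_mul]
      have := (hasDerivAt_const x (cL a b)).congr_of_eventuallyEq hev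
      have hF : F2 a b x = 0 := by
        rw [F2, habs, if_neg (by push_neg; linarith), if_neg (not_le.mpr hxb)]
      rwa [hF]

lemma F1_hasDeriv (a b : ℝ) (ha : 1 ≤ a) (hb : 2 * a ≤ b) (x : ℝ) :
    HasDerivAt (F1 a b) (F2 a b x) x := by
  rcases le_or_gt 0 x with h | h
  · exact F1_hasDeriv_nonneg a b ha hb h
  · have h1 := hasDerivAt_comp_neg (F1_hasDeriv_nonneg a b ha hb (x := -x) (by linarith))
    rw [neg_neg] at h1
    simp only [F1_odd] at h1
    rw [F2_even] at h1
    simpa [Pi.neg_def] using h1.neg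

lemma Sp1_bound (a b t : ℝ) (ha : 1 ≤ a) (hb : 2 * a ≤ b) (ht1 : a ≤ t) (ht2 : t ≤ b) :
    0 ≤ Sp1 a b t ∧ Sp1 a b t ≤ 4 * t ^ 3 := by
  have hba : (0 : ℝ) < b - a := by linarith
  set k := (3 * a ^ 2 - 1) / (2 * (b - a)) with hk_def
  have hk : k * (2 * (b - a)) = 3 * a ^ 2 - 1 := by
    rw [hk_def]; field_simp
  have hk0 : 0 ≤ k := by
    apply div_nonneg (by nlinarith) (by linarith)
  have hk2 : k * (t - a) ≤ (3 * a ^ 2 - 1) / 2 := by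
    have := mul_le_mul_of_nonneg_left (show t - a ≤ b - a by linarith) hk0
    nlinarith
  have hkt : k * (t - a) * (t - a) ≤ (3 * a ^ 2 - 1) / 2 * (t - a) :=
    mul_le_mul_of_nonneg_right hk2 (by linarith)
  constructor
  · rw [Sp1]
    nlinarith [mul_nonneg hk0 (sq_nonneg (t - a))]
  · rw [Sp1]
    have h3 : a ^ 3 ≤ t ^ 3 := pow_le_pow_left₀ (by linarith) ht1 3
    nlinarith [mul_nonneg hk0 (sq_nonneg (t - a)), sq_nonneg t, sq_nonneg (t - a),
      mul_nonneg (mul_nonneg (show (0:ℝ) ≤ t by linarith) (show (0:ℝ) ≤ t by linarith))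
        (show (0:ℝ) ≤ t - a by linarith)]

lemma cL_bound (a b t : ℝ) (ha : 1 ≤ a) (hb : 2 * a ≤ b) (ht : b ≤ t) :
    0 ≤ cL a b ∧ cL a b ≤ 3 * t ^ 3 := by
  have ht1 : a ≤ t := by linarith
  have h3 : a ^ 3 ≤ t ^ 3 := pow_le_pow_left₀ (by linarith) ht1 3
  constructor
  · rw [cL]
    nlinarith [mul_nonneg (show (0:ℝ) ≤ a by linarith) (show (0:ℝ) ≤ a ^ 2 - 1 by nlinarith),
      mul_nonneg (show (0:ℝ) ≤ b - a by linarith) (show (0:ℝ) ≤ 3 * a ^ 2 - 1 by nlinarith)]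
  · rw [cL]
    nlinarith [mul_nonneg (mul_nonneg (show (0:ℝ) ≤ t by linarith)
      (show (0:ℝ) ≤ t by linarith)) (show (0:ℝ) ≤ t - a by linarith),
      sq_nonneg (t - a), sq_nonneg t]

lemma Sp2_bound (a b t : ℝ) (ha : 1 ≤ a) (hb : 2 * a ≤ b) (ht1 : a ≤ t) (ht2 : t ≤ b) :
    0 ≤ Sp2 a b t ∧ Sp2 a b t ≤ 3 * a ^ 2 - 1 := by
  have hba : (0 : ℝ) < b - a := by linarith
  set m := (3 * a ^ 2 - 1) / (b - a) with hm_def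
  have hm : m * (b - a) = 3 * a ^ 2 - 1 := by rw [hm_def]; field_simp
  have hm0 : 0 ≤ m := div_nonneg (by nlinarith) (by linarith)
  constructor
  · rw [Sp2]
    have := mul_le_mul_of_nonneg_left (show t - a ≤ b - a by linarith) hm0
    nlinarith
  · rw [Sp2]
    nlinarith [mul_nonneg hm0 (show (0:ℝ) ≤ t - a by linarith)]

lemma ineq1 (a b x : ℝ) (ha : 1 ≤ a) (hb : 2 * a ≤ b) :
    |F1 a b x - (x ^ 3 - x)| ≤ if a ≤ |x| then 7 * |x| ^ 3 else 0 := by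
  by_cases h1 : |x| ≤ a
  · rw [F1, if_pos h1]
    simp only [sub_self, abs_zero]
    split_ifs
    · positivity
    · exact le_refl 0
  · push_neg at h1
    rw [if_pos (le_of_lt h1)]
    have hx1 : 1 < |x| := lt_of_le_of_lt ha h1
    have hx0 : x ≠ 0 := by intro h; rw [h] at hx1; simp at hx1; linarith
    rcases hx0.lt_or_gt with hneg | hpos
    · have habs : |x| = -x := abs_of_neg hneg
      by_cases h2 : |x| ≤ b
      · rw [F1, if_neg (not_le.mpr h1), if_pos h2, Real.sign_of_neg hneg]
        obtain ⟨hl, hu⟩ := Sp1_bound a b |x| ha hb (le_of_lt h1) h2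
        rw [abs_le]
        rw [habs] at hx1
        have hcube : -x ≤ (-x) ^ 3 := by
          nlinarith [mul_nonneg (mul_nonneg (show (0:ℝ) ≤ -x by linarith)
            (show (0:ℝ) ≤ -x - 1 by linarith)) (show (0:ℝ) ≤ -x + 1 by linarith)]
        constructor <;> rw [habs] at * <;> nlinarith [sq_nonneg x]
      · rw [F1, if_neg (not_le.mpr h1), if_neg h2, Real.sign_of_neg hneg]
        push_neg at h2
        obtain ⟨hl, hu⟩ := cL_bound a b |x| ha hb (le_of_lt h2)
        rw [abs_le]
        rw [habs] at hx1
        have hcube : -x ≤ (-x) ^ 3 := by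
          nlinarith [mul_nonneg (mul_nonneg (show (0:ℝ) ≤ -x by linarith)
            (show (0:ℝ) ≤ -x - 1 by linarith)) (show (0:ℝ) ≤ -x + 1 by linarith)]
        constructor <;> rw [habs] at * <;> nlinarith [sq_nonneg x]
    · have habs : |x| = x := abs_of_pos hpos
      by_cases h2 : |x| ≤ b
      · rw [F1, if_neg (not_le.mpr h1), if_pos h2, Real.sign_of_pos hpos]
        obtain ⟨hl, hu⟩ := Sp1_bound a b |x| ha hb (le_of_lt h1) h2
        rw [abs_le]
        rw [habs] at hx1
        have hcube : x ≤ x ^ 3 := by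
          nlinarith [mul_nonneg (mul_nonneg (show (0:ℝ) ≤ x by linarith)
            (show (0:ℝ) ≤ x - 1 by linarith)) (show (0:ℝ) ≤ x + 1 by linarith)]
        constructor <;> rw [habs] at * <;> nlinarith [sq_nonneg x]
      · rw [F1, if_neg (not_le.mpr h1), if_neg h2, Real.sign_of_pos hpos]
        push_neg at h2
        obtain ⟨hl, hu⟩ := cL_bound a b |x| ha hb (le_of_lt h2)
        rw [abs_le]
        rw [habs] at hx1
        have hcube : x ≤ x ^ 3 := by
          nlinarith [mul_nonneg (mul_nonneg (show (0:ℝ) ≤ x by linarith)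
            (show (0:ℝ) ≤ x - 1 by linarith)) (show (0:ℝ) ≤ x + 1 by linarith)]
        constructor <;> rw [habs] at * <;> nlinarith [sq_nonneg x]

lemma ineq2 (a b x : ℝ) (ha : 1 ≤ a) (hb : 2 * a ≤ b) :
    |F2 a b x - (3 * x ^ 2 - 1)| ≤ if a ≤ |x| then 9 * x ^ 2 else 0 := by
  by_cases h1 : |x| ≤ a
  · rw [F2, if_pos h1]
    simp only [sub_self, abs_zero]
    split_ifs
    · positivity
    · exact le_refl 0
  · push_neg at h1
    rw [if_pos (le_of_lt h1)]
    have hax : a ≤ |x| := le_of_lt h1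
    have hsq : a ^ 2 ≤ x ^ 2 := by
      have := sq_abs x
      nlinarith [abs_nonneg x]
    by_cases h2 : |x| ≤ b
    · rw [F2, if_neg (not_le.mpr h1), if_pos h2]
      obtain ⟨hl, hu⟩ := Sp2_bound a b |x| ha hb hax h2
      rw [abs_le]
      constructor <;> nlinarith
    · rw [F2, if_neg (not_le.mpr h1), if_neg h2]
      rw [abs_le]
      constructor <;> nlinarith


/-- there is a constant `A ≥ 1` such that for all `a ≥ A`, `b ≥ 2a` and all `x`:
`|f'(x) − h'(x)| ≤ 7|x|³ · 1{|x| ≥ a}` and `|f''(x) − h''(x)| ≤ 9x² · 1{|x| ≥ a}`;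
in particular `f' = h'` and `f'' = h''` on `[-a, a]`. -/
theorem clipped_loss_derivative_comparison :
    ∃ A : ℝ, 1 ≤ A ∧ ∀ a b : ℝ, A ≤ a → 2 * a ≤ b →
      (∀ x : ℝ,
        |deriv (fclip a b) x - deriv hq x| ≤ (if a ≤ |x| then 7 * |x| ^ 3 else 0) ∧
        |deriv (deriv (fclip a b)) x - deriv (deriv hq) x| ≤
          (if a ≤ |x| then 9 * x ^ 2 else 0)) ∧
      (∀ x ∈ Set.Icc (-a) a,
        deriv (fclip a b) x = deriv hq x ∧
        deriv (deriv (fclip a b)) x = deriv (deriv hq) x) := by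
  refine ⟨1, le_refl 1, fun a b ha hb => ?_⟩
  have hD1 : deriv (fclip a b) = F1 a b := funext fun y => (fclip_hasDeriv a b ha hb y).deriv
  have hDh : deriv hq = fun y => y ^ 3 - y := funext fun y => (hq_hasDeriv y).deriv
  have hD2 : deriv (F1 a b) = F2 a b := funext fun y => (F1_hasDeriv a b ha hb y).deriv
  have hDh2 : deriv (fun y : ℝ => y ^ 3 - y) = fun y => 3 * y ^ 2 - 1 :=
    funext fun y => (cube_hasDeriv y).deriv
  constructor
  · intro x
    simp only [hD1, hDh, hD2, hDh2]
    exact ⟨ineq1 a b x ha hb, ineq2 a b x ha hb⟩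
  · intro x hx
    have hxa : |x| ≤ a := abs_le.mpr ⟨hx.1, hx.2⟩
    simp only [hD1, hDh, hD2, hDh2]
    constructor
    · rw [F1, if_pos hxa]
    · rw [F2, if_pos hxa]
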